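/- Let α > 0, l ∈ (0,π), and δ ≥ 0, and set a_0 = (1+δ)l/((1+απ)(δ + 2l·c_α − l²c_α²)). For a ∈ [0, π−l] let J_a = δ + χ_{[a−l,a+l]} as a function on [−π,π]. If a_0 < π−l, then a ↦ osc(u_{J_a}) is increasing on [0, a_0] and decreasing on [a_0, π−l]; if a_0 ≥ π−l, then a ↦ osc(u_{J_a}) is increasing on [0, π−l]. -/

import Mathlib

open MeasureTheory Real Set Filter intervalIntegral

noncomputable def cA (α : ℝ) : ℝ := α / (1 + α * π)

noncomputable def robinG (α x y : ℝ) : ℝ :=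
  -(1/2) * cA α * x * y - (1/2) * |x - y| + 1 / (2 * cA α)

/-- Solution of the Robin problem with heat source `f`. -/
noncomputable def robinSol (α : ℝ) (f : ℝ → ℝ) (x : ℝ) : ℝ :=
  ∫ y in (-π)..π, robinG α x y * f y

/-- The class 𝔉(m,M,s) of heat sources. -/
def memF (m M s : ℝ) (f : ℝ → ℝ) : Prop :=
  MeasureTheory.IntegrableOn f (Set.Icc (-π) π) MeasureTheory.volume ∧
  (∀ᵐ x ∂(MeasureTheory.volume.restrict (Set.Icc (-π) π)), m ≤ f x ∧ f x ≤ M) ∧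
  (∫ x in (-π)..π, f x) = 2 * π * s

/-- Temperature gap (oscillation) over `[-π, π]`. -/
noncomputable def osc (u : ℝ → ℝ) : ℝ :=
  sSup (u '' Set.Icc (-π) π) - sInf (u '' Set.Icc (-π) π)

lemma absint_ge (x p q : ℝ) (hpq : p ≤ q) (hq : q ≤ x) :
    ∫ y in p..q, |x - y| = x*(q-p) - (q^2-p^2)/2 := by
  have h : EqOn (fun y => |x - y|) (fun y => x - y) (Set.uIcc p q) := by
    intro y hy
    rw [Set.uIcc_of_le hpq] at hy
    simp only
    rw [abs_of_nonneg]; linarith [hy.2]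
  rw [intervalIntegral.integral_congr h,
    intervalIntegral.integral_sub intervalIntegrable_const intervalIntegral.intervalIntegrable_id,
    intervalIntegral.integral_const, integral_id]
  simp; ring

lemma absint_le (x p q : ℝ) (hpq : p ≤ q) (hp : x ≤ p) :
    ∫ y in p..q, |x - y| = (q^2-p^2)/2 - x*(q-p) := by
  have h : EqOn (fun y => |x - y|) (fun y => y - x) (Set.uIcc p q) := by
    intro y hy
    rw [Set.uIcc_of_le hpq] at hy
    simp only
    rw [abs_of_nonpos (by linarith [hy.1] : x - y ≤ 0)]; ring
  rw [intervalIntegral.integral_congr h,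
    intervalIntegral.integral_sub intervalIntegral.intervalIntegrable_id intervalIntegrable_const,
    intervalIntegral.integral_const, integral_id]
  simp; ring

lemma absint_mid (x p q : ℝ) (hp : p ≤ x) (hq : x ≤ q) :
    ∫ y in p..q, |x - y| = ((x-p)^2 + (q-x)^2)/2 := by
  have c1 : IntervalIntegrable (fun y => |x - y|) volume p x :=
    ((continuous_const.sub continuous_id).abs).intervalIntegrable _ _
  have c2 : IntervalIntegrable (fun y => |x - y|) volume x q :=
    ((continuous_const.sub continuous_id).abs).intervalIntegrable _ _
  rw [← intervalIntegral.integral_add_adjacent_intervals c1 c2,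
    absint_ge x p x hp le_rfl, absint_le x x q hq le_rfl]
  ring

lemma intG (α x p q : ℝ) (hα : 0 < α) : ∫ y in p..q, robinG α x y =
    -(1/2)*(cA α)*x*((q^2-p^2)/2) - (1/2)*(∫ y in p..q, |x - y|) + (q-p)*(1/(2*cA α)) := by
  have h1 : IntervalIntegrable (fun y => -(1/2) * cA α * x * y) volume p q :=
    (continuous_const.mul continuous_id).intervalIntegrable _ _
  have h2 : IntervalIntegrable (fun y => (1/2) * |x - y|) volume p q :=
    (continuous_const.mul ((continuous_const.sub continuous_id).abs)).intervalIntegrable _ _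
  have h3 : IntervalIntegrable (fun _ : ℝ => 1 / (2 * cA α)) volume p q := intervalIntegrable_const
  have : ∫ y in p..q, robinG α x y
      = ∫ y in p..q, ((-(1/2) * cA α * x * y - (1/2) * |x - y|) + 1 / (2 * cA α)) := rfl
  rw [this, intervalIntegral.integral_add (h1.sub h2) h3, intervalIntegral.integral_sub h1 h2,
    intervalIntegral.integral_const_mul, intervalIntegral.integral_const_mul, integral_id,
    intervalIntegral.integral_const]
  simp [smul_eq_mul]

noncomputable def Kf (a l x : ℝ) : ℝ :=
  if x < a - l then 2*l*(a-x) else if x ≤ a+l then (x-a)^2 + l^2 else 2*l*(x-a)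

noncomputable def qf (c l δ a x : ℝ) : ℝ := δ*x^2/2 + c*l*a*x + Kf a l x / 2

lemma robinSol_eq (α l δ a x : ℝ) (hα : 0 < α) (hl : l ∈ Set.Ioo 0 π) (hδ : 0 ≤ δ)
    (ha : a ∈ Set.Icc 0 (π - l)) (hx : x ∈ Set.Icc (-π) π) :
    robinSol α (fun z => δ + (Set.Icc (a-l) (a+l)).indicator (fun _ => (1:ℝ)) z) x
      = (δ*(π/(cA α) - π^2/2) + l/(cA α)) - qf (cA α) l δ a x := by
  have hπ : 0 < π := pi_pos
  have hP : 0 < 1 + α * π := by nlinarith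
  have hc : 0 < cA α := div_pos hα hP
  have hcne : cA α ≠ 0 := ne_of_gt hc
  have h1 : -π < a - l := by rcases ha with ⟨h,_⟩; rcases hl with ⟨_,h2⟩; linarith
  have h2 : a + l ≤ π := by rcases ha with ⟨_,h⟩; linarith
  have h3 : a - l ≤ a + l := by rcases hl with ⟨h,_⟩; linarith
  have cG : Continuous fun y => robinG α x y := by
    unfold robinG
    exact ((continuous_const.mul continuous_id).sub
      (continuous_const.mul ((continuous_const.sub continuous_id).abs))).add continuous_const
  have split1 : (fun y => robinG α x y * (δ + (Set.Icc (a-l) (a+l)).indicator (fun _ => (1:ℝ)) y))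
      = fun y => δ * robinG α x y + (Set.Icc (a-l) (a+l)).indicator (fun y => robinG α x y) y := by
    funext y
    by_cases h : y ∈ Set.Icc (a-l) (a+l) <;> simp [Set.indicator, h] <;> ring
  have i1 : IntervalIntegrable (fun y => δ * robinG α x y) volume (-π) π :=
    (continuous_const.mul cG).intervalIntegrable _ _
  have i2 : IntervalIntegrable ((Set.Icc (a-l) (a+l)).indicator (fun y => robinG α x y)) volume (-π) π := by
    rw [intervalIntegrable_iff]
    have h4 : IntervalIntegrable (fun y => robinG α x y) volume (-π) π := cG.intervalIntegrable _ _
    rw [intervalIntegrable_iff] at h4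
    exact h4.indicator measurableSet_Icc
  unfold robinSol
  rw [split1, intervalIntegral.integral_add i1 i2, intervalIntegral.integral_const_mul]
  have hind : (∫ y in (-π)..π, (Set.Icc (a-l) (a+l)).indicator (fun y => robinG α x y) y)
      = ∫ y in (a-l)..(a+l), robinG α x y := by
    rw [intervalIntegral.integral_of_le (by linarith : -π ≤ π),
      MeasureTheory.setIntegral_indicator measurableSet_Icc,
      show Set.Ioc (-π) π ∩ Set.Icc (a-l) (a+l) = Set.Icc (a-l) (a+l) from
        Set.inter_eq_right.mpr (fun y hy => ⟨lt_of_lt_of_le h1 hy.1, le_trans hy.2 h2⟩),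
      MeasureTheory.integral_Icc_eq_integral_Ioc, ← intervalIntegral.integral_of_le h3]
  rw [hind, intG α x (-π) π hα, intG α x (a-l) (a+l) hα,
    absint_mid x (-π) π hx.1 hx.2]
  rcases lt_or_ge x (a-l) with hc1 | hc1
  · rw [absint_le x (a-l) (a+l) h3 hc1.le]
    unfold qf Kf
    rw [if_pos hc1]
    field_simp
    ring
  · rcases le_or_gt x (a+l) with hc2 | hc2
    · rw [absint_mid x (a-l) (a+l) hc1 hc2]
      unfold qf Kf
      rw [if_neg (not_lt.2 hc1), if_pos hc2]
      field_simp
      ring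
    · rw [absint_ge x (a-l) (a+l) h3 hc2.le]
      unfold qf Kf
      rw [if_neg (not_lt.2 hc1), if_neg (not_le.2 hc2)]
      field_simp
      ring

noncomputable def xmf (c l δ a : ℝ) : ℝ :=
  if a * (δ + c*l) ≤ l * (1+δ) then a*(1-c*l)/(1+δ) else (l - c*l*a)/δ

section minmax
variable {c l δ a x : ℝ}

lemma basic_facts (hc : 0 < c) (hcπ : c*π < 1) (hl : 0 < l) (hlπ : l < π)
    (ha1 : 0 ≤ a) (ha2 : a ≤ π - l) : c*l*a < l := by
  have h1 : c*a < 1 := by nlinarith [mul_nonneg hc.le (show (0:ℝ) ≤ π - l - a by linarith), mul_pos hc hl]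
  nlinarith [mul_pos hl (show (0:ℝ) < 1 - c*a by linarith)]

lemma qmin (hc : 0 < c) (hcπ : c*π < 1) (hl : 0 < l) (hlπ : l < π) (hδ : 0 ≤ δ)
    (ha1 : 0 ≤ a) (ha2 : a ≤ π - l) (hx : x ∈ Set.Icc (-π) π) :
    qf c l δ a x ≤ qf c l δ a (-π) := by
  have hπ : 0 < π := pi_pos
  have hcla : c*l*a < l := basic_facts hc hcπ hl hlπ ha1 ha2
  obtain ⟨hx1, hx2⟩ := hx
  unfold qf Kf
  rw [if_pos (show -π < a - l by linarith)]
  rcases lt_or_ge x (a-l) with hc1 | hc1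
  · rw [if_pos hc1]
    nlinarith [mul_nonneg (show (0:ℝ) ≤ x + π by linarith)
        (show (0:ℝ) ≤ l - c*l*a - δ*(x-π)/2 by nlinarith [mul_nonneg hδ (show (0:ℝ) ≤ π - x by linarith)])]
  · rw [if_neg (not_lt.2 hc1)]
    -- value at -π
    have e1 : δ*(a-l)^2/2 + c*l*a*(a-l) + ((a-l-a)^2+l^2)/2
        ≤ δ*(-π)^2/2 + c*l*a*(-π) + (2*l*(a-(-π)))/2 := by
      nlinarith [mul_nonneg (show (0:ℝ) ≤ a - l + π by linarith)
        (show (0:ℝ) ≤ l - c*l*a - δ*((a-l)-π)/2 by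
          nlinarith [mul_nonneg hδ (show (0:ℝ) ≤ π - (a-l) by linarith)])]
    have e2 : δ*(a+l)^2/2 + c*l*a*(a+l) + ((a+l-a)^2+l^2)/2
        ≤ δ*(-π)^2/2 + c*l*a*(-π) + (2*l*(a-(-π)))/2 := by
      nlinarith [mul_nonneg (show (0:ℝ) ≤ π - (a+l) by linarith)
          (show (0:ℝ) ≤ c*l*a + l by positivity),
        mul_nonneg hδ (mul_nonneg (show (0:ℝ) ≤ π - (a+l) by linarith)
          (show (0:ℝ) ≤ π + (a+l) by linarith)),
        mul_nonneg (mul_nonneg hl.le ha1) (show (0:ℝ) ≤ 1 - c*π by linarith)]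
    rcases le_or_gt x (a+l) with hc2 | hc2
    · rw [if_pos hc2]
      have c3 : (0:ℝ) ≤ a + l - x := by linarith
      have c4 : (0:ℝ) ≤ x - (a-l) := by linarith
      have key : 2*l*(δ*x^2/2 + c*l*a*x + ((x-a)^2+l^2)/2)
          = (a+l-x)*(δ*(a-l)^2/2 + c*l*a*(a-l) + ((a-l-a)^2+l^2)/2)
          + (x-(a-l))*(δ*(a+l)^2/2 + c*l*a*(a+l) + ((a+l-a)^2+l^2)/2)
          - l*(1+δ)*((a+l-x)*(x-(a-l))) := by ring
      have t1 := mul_le_mul_of_nonneg_left e1 c3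
      have t2 := mul_le_mul_of_nonneg_left e2 c4
      have t3 : 0 ≤ l*(1+δ)*((a+l-x)*(x-(a-l))) :=
        mul_nonneg (mul_nonneg hl.le (by linarith)) (mul_nonneg c3 c4)
      have hfin : 2*l*(δ*x^2/2 + c*l*a*x + ((x-a)^2+l^2)/2)
          ≤ 2*l*(δ*(-π)^2/2 + c*l*a*(-π) + 2*l*(a - -π)/2) := by linarith [t1, t2, t3, key]
      exact (mul_le_mul_iff_right₀ (by positivity : (0:ℝ) < 2*l)).mp hfin
    · rw [if_neg (not_le.2 hc2)]
      nlinarith [mul_nonneg (show (0:ℝ) ≤ π - x by linarith)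
          (show (0:ℝ) ≤ c*l*a + l by positivity),
        mul_nonneg hδ (mul_nonneg (show (0:ℝ) ≤ π - x by linarith)
          (show (0:ℝ) ≤ π + x by linarith)),
        mul_nonneg (mul_nonneg hl.le ha1) (show (0:ℝ) ≤ 1 - c*π by linarith)]

end minmax

section qmaxsec
variable {c l δ a x : ℝ}

set_option maxHeartbeats 1000000 in
lemma qmax (hc : 0 < c) (hcπ : c*π < 1) (hl : 0 < l) (hlπ : l < π) (hδ : 0 ≤ δ)
    (ha1 : 0 ≤ a) (ha2 : a ≤ π - l) (hx : x ∈ Set.Icc (-π) π) :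
    qf c l δ a (xmf c l δ a) ≤ qf c l δ a x := by
  have hπ : 0 < π := pi_pos
  have hcla : c*l*a < l := basic_facts hc hcπ hl hlπ ha1 ha2
  have hcl : c*l < 1 := by nlinarith
  have h1δ : (0:ℝ) < 1 + δ := by linarith
  obtain ⟨hx1, hx2⟩ := hx
  unfold xmf
  rcases le_or_gt (a * (δ + c*l)) (l * (1+δ)) with hA | hB
  · -- case A : x_max = a(1-cl)/(1+δ) in [a-l, a+l]
    rw [if_pos hA]
    have hxm1 : a - l ≤ a*(1-c*l)/(1+δ) := by
      rw [le_div_iff₀ h1δ]; nlinarith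
    have hxm2 : a*(1-c*l)/(1+δ) ≤ a + l := by
      rw [div_le_iff₀ h1δ]; nlinarith [mul_nonneg (mul_nonneg hc.le hl.le) ha1, mul_nonneg hδ ha1]
    have hmid : ∀ z, a - l ≤ z → z ≤ a + l →
        qf c l δ a (a*(1-c*l)/(1+δ)) ≤ qf c l δ a z := by
      intro z hz1 hz2
      have key : 2*(1+δ)*(qf c l δ a z - qf c l δ a (a*(1-c*l)/(1+δ)))
          = ((1+δ)*z - a*(1-c*l))^2 := by
        unfold qf Kf
        rw [if_neg (not_lt.2 hz1), if_pos hz2, if_neg (not_lt.2 hxm1), if_pos hxm2]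
        field_simp
        ring
      nlinarith [sq_nonneg ((1+δ)*z - a*(1-c*l)), key]
    unfold qf Kf
    rcases lt_or_ge x (a-l) with hc1 | hc1
    · rw [if_pos hc1]
      have step := hmid (a-l) le_rfl (by linarith)
      unfold qf Kf at step
      rw [if_neg (lt_irrefl (a-l)), if_pos (by linarith : a - l ≤ a + l)] at step
      have grow : δ*(a-l)^2/2 + c*l*a*(a-l) + ((a-l-a)^2 + l^2)/2
          ≤ δ*x^2/2 + c*l*a*x + 2*l*(a-x)/2 := by
        nlinarith [mul_nonneg (show (0:ℝ) ≤ a - l - x by linarith)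
          (show (0:ℝ) ≤ l - c*l*a - δ*(x+a-l)/2 by
            nlinarith [mul_nonneg hδ (show (0:ℝ) ≤ a - l - x by linarith)])]
      exact le_trans step grow
    · rcases le_or_gt x (a+l) with hc2 | hc2
      · have step := hmid x hc1 hc2
        unfold qf Kf at step
        rw [if_neg (not_lt.2 hc1), if_pos hc2] at step
        rw [if_neg (not_lt.2 hc1), if_pos hc2]
        exact step
      · rw [if_neg (not_lt.2 hc1), if_neg (not_le.2 hc2)]
        have step := hmid (a+l) (by linarith) le_rfl
        unfold qf Kf at step
        rw [if_neg (by push_neg; linarith : ¬ (a+l < a - l)), if_pos le_rfl] at step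
        have grow : δ*(a+l)^2/2 + c*l*a*(a+l) + ((a+l-a)^2 + l^2)/2
            ≤ δ*x^2/2 + c*l*a*x + 2*l*(x-a)/2 := by
          nlinarith [mul_nonneg (show (0:ℝ) ≤ x - (a+l) by linarith)
              (show (0:ℝ) ≤ c*l*a + l by positivity),
            mul_nonneg hδ (mul_nonneg (show (0:ℝ) ≤ x - (a+l) by linarith)
              (show (0:ℝ) ≤ x + (a+l) by linarith))]
        exact le_trans step grow
  · -- case B : x_max = (l - c*l*a)/δ < a - l
    rw [if_neg (not_le.2 hB)]
    have hδpos : 0 < δ := by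
      rcases eq_or_lt_of_le hδ with h | h
      · exfalso; rw [← h] at hB; nlinarith
      · exact h
    have hxm : (l - c*l*a)/δ < a - l := by
      rw [div_lt_iff₀ hδpos]; nlinarith
    -- common value at a-l (in polynomial form of the left branch)
    have e0 : qf c l δ a ((l - c*l*a)/δ) ≤ δ*(a-l)^2/2 + c*l*a*(a-l) + 2*l*(a-(a-l))/2 := by
      have key : 2*δ*((δ*(a-l)^2/2 + c*l*a*(a-l) + 2*l*(a-(a-l))/2) - qf c l δ a ((l-c*l*a)/δ))
          = (δ*(a-l) - (l - c*l*a))^2 := by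
        unfold qf Kf
        rw [if_pos hxm]
        field_simp
        ring
      nlinarith [sq_nonneg (δ*(a-l) - (l - c*l*a)), key]
    have hleft : ∀ z, z < a - l → qf c l δ a ((l-c*l*a)/δ) ≤ qf c l δ a z := by
      intro z hz
      have key : 2*δ*(qf c l δ a z - qf c l δ a ((l-c*l*a)/δ)) = (δ*z - (l - c*l*a))^2 := by
        unfold qf Kf
        rw [if_pos hz, if_pos hxm]
        field_simp
        ring
      nlinarith [sq_nonneg (δ*z - (l - c*l*a)), key]
    rcases lt_or_ge x (a-l) with hc1 | hc1
    · exact hleft x hc1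
    · have hmidgrow : ∀ z, a - l ≤ z → z ≤ a + l →
          δ*(a-l)^2/2 + c*l*a*(a-l) + 2*l*(a-(a-l))/2 ≤ δ*z^2/2 + c*l*a*z + ((z-a)^2+l^2)/2 := by
        intro z hz1 hz2
        nlinarith [mul_nonneg (show (0:ℝ) ≤ z - (a-l) by linarith)
          (show (0:ℝ) ≤ (1+δ)*(z+a-l)/2 + c*l*a - a by
            nlinarith [mul_nonneg hδ (show (0:ℝ) ≤ z - (a-l) by linarith)])]
      rcases le_or_gt x (a+l) with hc2 | hc2
      · have := hmidgrow x hc1 hc2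
        unfold qf Kf
        rw [if_neg (not_lt.2 hc1), if_pos hc2]
        exact le_trans e0 this
      · have h2 := hmidgrow (a+l) (by linarith) le_rfl
        have grow : δ*(a+l)^2/2 + c*l*a*(a+l) + ((a+l-a)^2 + l^2)/2
            ≤ δ*x^2/2 + c*l*a*x + 2*l*(x-a)/2 := by
          nlinarith [mul_nonneg (show (0:ℝ) ≤ x - (a+l) by linarith)
              (show (0:ℝ) ≤ c*l*a + l by positivity),
            mul_nonneg hδ (mul_nonneg (show (0:ℝ) ≤ x - (a+l) by linarith)
              (show (0:ℝ) ≤ x + (a+l) by linarith))]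
        unfold qf Kf
        rw [if_neg (not_lt.2 hc1), if_neg (not_le.2 hc2)]
        exact le_trans e0 (le_trans h2 grow)

lemma xm_mem (hc : 0 < c) (hcπ : c*π < 1) (hl : 0 < l) (hlπ : l < π) (hδ : 0 ≤ δ)
    (ha1 : 0 ≤ a) (ha2 : a ≤ π - l) : xmf c l δ a ∈ Set.Icc (-π) π := by
  have hπ : 0 < π := pi_pos
  have hcla : c*l*a < l := basic_facts hc hcπ hl hlπ ha1 ha2
  have hcl : c*l < 1 := by nlinarith
  have h1δ : (0:ℝ) < 1 + δ := by linarith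
  unfold xmf
  rcases le_or_gt (a * (δ + c*l)) (l * (1+δ)) with hA | hB
  · rw [if_pos hA]
    constructor
    · have : (0:ℝ) ≤ a*(1-c*l)/(1+δ) := div_nonneg (mul_nonneg ha1 (by linarith)) h1δ.le
      linarith
    · rw [div_le_iff₀ h1δ]
      nlinarith [mul_nonneg ha1 (mul_nonneg hc.le hl.le), mul_nonneg hδ pi_pos.le]
  · rw [if_neg (not_le.2 hB)]
    have hδpos : 0 < δ := by
      rcases eq_or_lt_of_le hδ with h | h
      · exfalso; rw [← h] at hB; nlinarith
      · exact h
    constructor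
    · have : (0:ℝ) ≤ (l - c*l*a)/δ := by
        apply div_nonneg (by linarith) hδpos.le
      linarith
    · rw [div_le_iff₀ hδpos]; nlinarith [mul_nonneg hδpos.le (show (0:ℝ) ≤ a by linarith)]

end qmaxsec

section psisec
variable {c l δ a : ℝ}

lemma psiA (hc : 0 < c) (hcπ : c*π < 1) (hl : 0 < l) (hlπ : l < π) (hδ : 0 ≤ δ)
    (ha1 : 0 ≤ a) (ha2 : a ≤ π - l) (hA : a * (δ + c*l) ≤ l * (1+δ)) :
    qf c l δ a (-π) - qf c l δ a (xmf c l δ a)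
      = δ*π^2/2 - c*l*a*π + l*a + l*π - (a^2+l^2)/2 + a^2*(1-c*l)^2/(2*(1+δ)) := by
  have hπ : 0 < π := pi_pos
  have h1δ : (0:ℝ) < 1 + δ := by linarith
  have hxm1 : a - l ≤ a*(1-c*l)/(1+δ) := by
    rw [le_div_iff₀ h1δ]; nlinarith
  have hxm2 : a*(1-c*l)/(1+δ) ≤ a + l := by
    rw [div_le_iff₀ h1δ]; nlinarith [mul_nonneg (mul_nonneg hc.le hl.le) ha1, mul_nonneg hδ ha1]
  unfold xmf qf Kf
  rw [if_pos hA, if_pos (show -π < a - l by linarith), if_neg (not_lt.2 hxm1), if_pos hxm2]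
  field_simp
  ring

lemma psiB (hc : 0 < c) (hcπ : c*π < 1) (hl : 0 < l) (hlπ : l < π) (hδ : 0 ≤ δ)
    (ha1 : 0 ≤ a) (ha2 : a ≤ π - l) (hB : l * (1+δ) ≤ a * (δ + c*l)) :
    qf c l δ a (-π) - qf c l δ a (xmf c l δ a)
      = δ*π^2/2 - c*l*a*π + l*π + (l - c*l*a)^2/(2*δ) := by
  have hπ : 0 < π := pi_pos
  have hcla : c*l*a < l := basic_facts hc hcπ hl hlπ ha1 ha2
  have h1δ : (0:ℝ) < 1 + δ := by linarith
  have hδpos : 0 < δ := by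
    rcases eq_or_lt_of_le hδ with h | h
    · exfalso; rw [← h] at hB; nlinarith
    · exact h
  rcases lt_or_eq_of_le hB with hBs | hBe
  · have hxm : (l - c*l*a)/δ < a - l := by
      rw [div_lt_iff₀ hδpos]; nlinarith
    unfold xmf qf Kf
    rw [if_neg (not_le.2 hBs), if_pos (show -π < a - l by linarith), if_pos hxm]
    field_simp
    ring
  · -- boundary case: the A-branch is taken but both formulas agree
    have hane : a = l * (1+δ) / (δ + c*l) := by
      have hpos : 0 < δ + c*l := by positivity
      field_simp
      linarith [hBe]
    have hA' : a * (δ + c*l) ≤ l * (1+δ) := le_of_eq hBe.symm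
    rw [psiA hc hcπ hl hlπ hδ ha1 ha2 hA']
    rw [hane]
    have hpos : (0:ℝ) < δ + c*l := by positivity
    field_simp
    ring
end psisec

set_option maxHeartbeats 1000000 in
/-- Lemma 3 (monotonicity of the oscillation in the position `a`). -/
theorem lemma3_monotone (α l δ : ℝ) (hα : 0 < α) (hl : l ∈ Set.Ioo 0 π) (hδ : 0 ≤ δ)
    (a0 : ℝ)
    (ha0 : a0 = (1 + δ) * l / ((1 + α * π) * (δ + 2 * l * cA α - l^2 * (cA α)^2)))
    (Φ : ℝ → ℝ)
    (hΦ : Φ = fun a => osc (robinSol α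
      (fun x => δ + (Set.Icc (a - l) (a + l)).indicator (fun _ => (1:ℝ)) x))) :
    (a0 < π - l → StrictMonoOn Φ (Set.Icc 0 a0) ∧ StrictAntiOn Φ (Set.Icc a0 (π - l))) ∧
    (π - l ≤ a0 → StrictMonoOn Φ (Set.Icc 0 (π - l))) := by
  obtain ⟨hl1, hl2⟩ := hl
  have hπ : 0 < π := pi_pos
  set c := cA α with hcdef
  have hP : 0 < 1 + α * π := by nlinarith
  have hcP : c * (1 + α * π) = α := by rw [hcdef]; unfold cA; field_simp
  have hc : 0 < c := by rw [hcdef]; exact div_pos hα hP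
  have hcπ : c * π < 1 := by
    have h' : c*π*(1+α*π) = α*π := by linear_combination π * hcP
    nlinarith [h', hP]
  have hcl : c * l < 1 := by nlinarith [mul_le_mul_of_nonneg_left hl2.le hc.le]
  have hD : 0 < δ + 2*l*c - l^2*c^2 := by
    nlinarith [mul_pos (mul_pos hl1 hc) (show (0:ℝ) < 2 - c*l by linarith)]
  have hDne : (δ + 2*l*c - l^2*c^2) ≠ 0 := ne_of_gt hD
  have hPne : (1 + α*π) ≠ 0 := ne_of_gt hP
  have ha0E : a0 * ((1 + α*π) * (δ + 2*l*c - l^2*c^2)) = (1+δ)*l := by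
    rw [ha0]; field_simp
    exact div_self (by intro h; apply hDne; linarith)
  have ha0pos : 0 < a0 := by
    rw [ha0]
    exact div_pos (mul_pos (by linarith) hl1) (mul_pos hP (by nlinarith))
  have hδcl : (0:ℝ) < δ + c*l := by positivity
  have hgap : δ + c*l < (1+α*π)*(δ + 2*l*c - l^2*c^2) := by
    nlinarith [mul_nonneg (mul_nonneg hα.le hπ.le) hδ,
      mul_pos (mul_pos hl1 hc) (show (0:ℝ) < 1 - c*l by linarith),
      mul_nonneg (mul_nonneg hα.le hπ.le)
        (mul_nonneg (mul_nonneg hl1.le hc.le) (show (0:ℝ) ≤ 2 - c*l by linarith))]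
  have ha0A : a0 * (δ + c*l) < l * (1+δ) := by
    nlinarith [mul_pos ha0pos (sub_pos.2 hgap)]
  -- closed form of Φ
  have phi_eq : ∀ b, 0 ≤ b → b ≤ π - l →
      Φ b = qf c l δ b (-π) - qf c l δ b (xmf c l δ b) := by
    intro b hb1 hb2
    have hΦb : Φ b = osc (robinSol α
        (fun x => δ + (Set.Icc (b - l) (b + l)).indicator (fun _ => (1:ℝ)) x)) := by rw [hΦ]
    rw [hΦb]
    unfold osc
    set u : ℝ → ℝ := robinSol α
        (fun x => δ + (Set.Icc (b - l) (b + l)).indicator (fun _ => (1:ℝ)) x) with hu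
    have hueq : ∀ x ∈ Set.Icc (-π) π, u x = (δ*(π/c - π^2/2) + l/c) - qf c l δ b x := by
      intro x hx
      exact robinSol_eq α l δ b x hα ⟨hl1, hl2⟩ hδ ⟨hb1, hb2⟩ hx
    have hxm : xmf c l δ b ∈ Set.Icc (-π) π := xm_mem hc hcπ hl1 hl2 hδ hb1 hb2
    have hmπ : -π ∈ Set.Icc (-π) π := ⟨le_refl _, by linarith⟩
    have hG : IsGreatest (u '' Set.Icc (-π) π) (u (xmf c l δ b)) := by
      refine ⟨Set.mem_image_of_mem u hxm, ?_⟩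
      rintro _ ⟨x, hx, rfl⟩
      rw [hueq x hx, hueq _ hxm]
      have := qmax hc hcπ hl1 hl2 hδ hb1 hb2 hx
      linarith
    have hL : IsLeast (u '' Set.Icc (-π) π) (u (-π)) := by
      refine ⟨Set.mem_image_of_mem u hmπ, ?_⟩
      rintro _ ⟨x, hx, rfl⟩
      rw [hueq x hx, hueq _ hmπ]
      have := qmin hc hcπ hl1 hl2 hδ hb1 hb2 hx
      linarith
    rw [hG.csSup_eq, hL.csInf_eq, hueq _ hxm, hueq _ hmπ]
    ring
  have F : 2*l*(1+δ)*(1-c*π) = 2*a0*(δ + 2*l*c - l^2*c^2) := by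
    linear_combination (-2*(1-c*π))*ha0E + (-2*a0*(δ+2*l*c-l^2*c^2)*π)*hcP
  have h1δ : (0:ℝ) < 1+δ := by linarith
  have keyA : ∀ p q : ℝ,
      ((δ*π^2/2 - c*l*q*π + l*q + l*π - (q^2+l^2)/2 + q^2*(1-c*l)^2/(2*(1+δ)))
        - (δ*π^2/2 - c*l*p*π + l*p + l*π - (p^2+l^2)/2 + p^2*(1-c*l)^2/(2*(1+δ))))*(2*(1+δ))
      = (q-p)*(2*l*(1+δ)*(1-c*π) - (p+q)*(δ + 2*l*c - l^2*c^2)) := by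
    intro p q; field_simp; ring
  have monoAA : ∀ p q, 0 ≤ p → p < q → q ≤ a0 → q ≤ π - l → Φ p < Φ q := by
    intro p q hp hpq hqa0 hqπ
    have hqA : q * (δ + c*l) ≤ l * (1+δ) := by
      nlinarith [mul_nonneg (show (0:ℝ) ≤ a0 - q by linarith) hδcl.le]
    have hpA : p * (δ + c*l) ≤ l * (1+δ) := by
      nlinarith [mul_nonneg (show (0:ℝ) ≤ q - p by linarith) hδcl.le]
    rw [phi_eq p hp (by linarith), phi_eq q (by linarith) hqπ,
      psiA hc hcπ hl1 hl2 hδ hp (by linarith) hpA,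
      psiA hc hcπ hl1 hl2 hδ (by linarith) hqπ hqA]
    have hbr : 0 < 2*l*(1+δ)*(1-c*π) - (p+q)*(δ + 2*l*c - l^2*c^2) := by
      rw [F]; nlinarith [mul_pos hD (show (0:ℝ) < 2*a0 - (p+q) by linarith)]
    nlinarith [keyA p q, mul_pos (sub_pos.2 hpq) hbr, h1δ]
  have antiAA : ∀ p q, a0 ≤ p → p < q → q ≤ π - l → p*(δ+c*l) ≤ l*(1+δ) →
      q*(δ+c*l) ≤ l*(1+δ) → Φ q < Φ p := by
    intro p q hp hpq hqπ hpA hqA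
    have hp0 : 0 ≤ p := le_trans ha0pos.le hp
    rw [phi_eq p hp0 (by linarith), phi_eq q (by linarith) hqπ,
      psiA hc hcπ hl1 hl2 hδ hp0 (by linarith) hpA,
      psiA hc hcπ hl1 hl2 hδ (by linarith) hqπ hqA]
    have hbr : 2*l*(1+δ)*(1-c*π) - (p+q)*(δ + 2*l*c - l^2*c^2) < 0 := by
      rw [F]; nlinarith [mul_pos hD (show (0:ℝ) < (p+q) - 2*a0 by linarith)]
    nlinarith [keyA p q, mul_pos (sub_pos.2 hpq) (neg_pos.2 hbr), h1δ]
  have antiBB : ∀ p q, 0 ≤ p → p < q → q ≤ π - l → l*(1+δ) ≤ p*(δ+c*l) → Φ q < Φ p := by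
    intro p q hp hpq hqπ hpB
    have hqB : l*(1+δ) ≤ q*(δ+c*l) := by
      nlinarith [mul_nonneg (show (0:ℝ) ≤ q - p by linarith) hδcl.le]
    have hclp : c*l*p < l := basic_facts hc hcπ hl1 hl2 hp (by linarith)
    have hδpos : 0 < δ := by
      rcases eq_or_lt_of_le hδ with h | h
      · exfalso; rw [← h] at hpB; nlinarith
      · exact h
    rw [phi_eq p hp (by linarith), phi_eq q (by linarith) hqπ,
      psiB hc hcπ hl1 hl2 hδ hp (by linarith) hpB,
      psiB hc hcπ hl1 hl2 hδ (by linarith) hqπ hqB]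
    have keyB : ((δ*π^2/2 - c*l*p*π + l*π + (l - c*l*p)^2/(2*δ))
        - (δ*π^2/2 - c*l*q*π + l*π + (l - c*l*q)^2/(2*δ)))*(2*δ)
        = c*l*(q-p)*(2*δ*π + 2*l - c*l*(p+q)) := by
      field_simp; ring
    have hbr : 0 < 2*δ*π + 2*l - c*l*(p+q) := by
      nlinarith [mul_nonneg (mul_nonneg hc.le hl1.le)
          (show (0:ℝ) ≤ 2*(π-l) - (p+q) by linarith),
        mul_pos hl1 (show (0:ℝ) < 1 - c*π by linarith),
        mul_pos (mul_pos hl1 hc) hl1, mul_nonneg hδ hπ.le]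
    nlinarith [keyB, mul_pos (mul_pos (mul_pos hc hl1) (sub_pos.2 hpq)) hbr, hδpos]
  constructor
  · intro hsplit
    constructor
    · intro p hp q hq hpq
      exact monoAA p q hp.1 hpq hq.2 (by linarith [hq.2])
    · intro p hp q hq hpq
      rcases le_or_gt (q*(δ+c*l)) (l*(1+δ)) with hqA | hqB
      · have hpA : p*(δ+c*l) ≤ l*(1+δ) := by
          nlinarith [mul_nonneg (show (0:ℝ) ≤ q - p by linarith) hδcl.le]
        exact antiAA p q hp.1 hpq hq.2 hpA hqA
      · rcases le_or_gt (l*(1+δ)) (p*(δ+c*l)) with hpB | hpA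
        · exact antiBB p q (le_trans ha0pos.le hp.1) hpq hq.2 hpB
        · set t := l*(1+δ)/(δ+c*l) with ht
          have htp : p < t := by rw [ht, lt_div_iff₀ hδcl]; linarith
          have htq : t < q := by rw [ht, div_lt_iff₀ hδcl]; linarith
          have htA : t*(δ+c*l) ≤ l*(1+δ) := by
            rw [ht]; field_simp
            exact le_rfl
          have htB : l*(1+δ) ≤ t*(δ+c*l) := by
            rw [ht]; field_simp
            exact le_rfl
          have h1 : Φ t < Φ p := antiAA p t hp.1 htp (by linarith [hq.2]) hpA.le htA
          have h2 : Φ q < Φ t :=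
            antiBB t q (by positivity) htq hq.2 htB
          linarith
  · intro hsplit p hp q hq hpq
    exact monoAA p q hp.1 hpq (by linarith [hq.2]) hq.2
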